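/- Let ℓ ≥ 1, m = ⌈log_t ℓ⌉, and ℓ₁ = ℓ − ⌊(t^m − ℓ)/(t−1)⌋. Then any t-ary tree achieving minimal path length among trees with ℓ leaves has profile D_j = t^j for 0 ≤ j ≤ m−1, D_m = ℓ₁, and D_j = 0 for j > m; in particular all its leaves are at depth m or m−1. -/

import Mathlib

/-- A `t`-ary tree: either empty, or a root node with `t` ordered subtrees. -/
inductive TAry (t : ℕ) : Type where
  | nil : TAry t
  | node : (Fin t → TAry t) → TAry t

namespace TAry

variable {t : ℕ}

/-- Number of nodes of a `t`-ary tree. -/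
def size : TAry t → ℕ
  | nil => 0
  | node c => 1 + ∑ i, (c i).size

/-- Sum over nodes of `d +` (depth of the node). -/
def plFrom : TAry t → ℕ → ℕ
  | nil, _ => 0
  | node c, d => d + ∑ i, (c i).plFrom (d + 1)

/-- Path length: the sum of the depths of all nodes. -/
def pathLength (T : TAry t) : ℕ := T.plFrom 0

/-- Number of nodes at depth `j` (the profile `D_j`). -/
def depthCount : ℕ → TAry t → ℕ
  | _, nil => 0
  | 0, node _ => 1
  | j + 1, node c => ∑ i, depthCount j (c i)

/-- Number of leaves (nodes all of whose subtrees are empty). -/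
def leaves : TAry t → ℕ
  | nil => 0
  | node c => max 1 (∑ i, (c i).leaves)

end TAry

namespace TAry
variable {t : ℕ}

/-- Every internal (non-leaf) node has exactly one child. -/
def chain : TAry t → Prop
  | nil => True
  | node c => (∀ i, c i = nil) ∨ ∃ i, c i ≠ nil ∧ chain (c i) ∧ ∀ j, j ≠ i → c j = nil

/-- Number of leaves at depth `j`. -/
def leavesAt : ℕ → TAry t → ℕ
  | _, nil => 0
  | 0, node c => if (∑ i, (c i).size) = 0 then 1 else 0
  | j + 1, node c => ∑ i, leavesAt j (c i)

/-- The subtree of `T` at position `pos` (empty tree if the position is invalid). -/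
def getAt : TAry t → List (Fin t) → TAry t
  | T, [] => T
  | nil, _ :: _ => nil
  | node c, i :: rest => getAt (c i) rest

/-- Replace the subtree of `T` at position `pos` by `τ`. -/
def replaceAt : TAry t → List (Fin t) → TAry t → TAry t
  | _, [], τ => τ
  | nil, _ :: _, _ => nil
  | node c, i :: rest, τ => node (fun j => if j = i then replaceAt (c i) rest τ else c j)

/-- Attach the trees `τs i` at the positions `pos i`, for `i = 0, …, ℓ-1`. -/
def attachAll {ℓ : ℕ} (T : TAry t) (pos : Fin ℓ → List (Fin t)) (τs : Fin ℓ → TAry t) :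
    TAry t :=
  (List.finRange ℓ).foldl (fun A i => replaceAt A (pos i) (τs i)) T

end TAry

/-- The binary entropy function (natural logarithm). -/
noncomputable def binEnt (x : ℝ) : ℝ := -x * Real.log x - (1 - x) * Real.log (1 - x)

/-- Number of `t`-ary trees with exactly `n` nodes. -/
noncomputable def Ct (t n : ℕ) : ℕ := Nat.card {T : TAry t // T.size = n}

/-- Number of `t`-ary trees with path length exactly `p`. -/
noncomputable def Tt (t p : ℕ) : ℕ := Nat.card {T : TAry t // T.pathLength = p}

namespace TAry
variable {t : ℕ}

/-- number of nodes at depth ≥ j -/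
def deep : ℕ → TAry t → ℕ
  | _, nil => 0
  | 0, node c => 1 + ∑ i, (c i).size
  | j + 1, node c => ∑ i, deep j (c i)

theorem size_eq_zero : ∀ {T : TAry t}, T.size = 0 → T = nil
  | nil, _ => rfl
  | node c, h => by simp [size] at h

theorem deep_zero : ∀ T : TAry t, deep 0 T = T.size
  | nil => rfl
  | node _ => rfl

theorem plFrom_eq (T : TAry t) : ∀ d : ℕ, T.plFrom d = T.pathLength + d * T.size := by
  induction T with
  | nil => intro d; simp [plFrom, pathLength, size]
  | node c ih =>
    intro d
    simp only [plFrom, pathLength, size]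
    have h1 : ∀ i : Fin t, (c i).plFrom (d+1) = (c i).pathLength + (d+1) * (c i).size :=
      fun i => ih i (d+1)
    have h0 : ∀ i : Fin t, (c i).plFrom (0+1) = (c i).pathLength + (0+1) * (c i).size :=
      fun i => ih i 1
    simp only [Finset.sum_congr rfl (fun i _ => h1 i), Finset.sum_congr rfl (fun i _ => h0 i)]
    simp [Finset.sum_add_distrib, Finset.mul_sum, mul_add]
    simp only [add_mul, one_mul, Finset.sum_add_distrib]
    ring

theorem pl_node (c : Fin t → TAry t) :
    pathLength (node c) = ∑ i, ((c i).pathLength + (c i).size) := by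
  simp only [pathLength, plFrom]
  rw [Finset.sum_congr rfl (fun i _ => plFrom_eq (c i) 1)]
  simp [pathLength]

theorem deep_succ : ∀ (T : TAry t) (j : ℕ), deep j T = depthCount j T + deep (j+1) T := by
  intro T
  induction T with
  | nil => intro j; simp [deep, depthCount]
  | node c ih =>
    intro j
    cases j with
    | zero =>
      simp only [deep, depthCount]
      rw [Finset.sum_congr rfl (fun i _ => (deep_zero (c i)).symm)]
    | succ j =>
      simp only [deep, depthCount]
      rw [Finset.sum_congr rfl (fun i _ => ih i j), Finset.sum_add_distrib]

theorem deep_of_size_le : ∀ (T : TAry t) (j : ℕ), T.size ≤ j → deep j T = 0 := by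
  intro T
  induction T with
  | nil => intro j _; simp [deep]
  | node c ih =>
    intro j hj
    simp only [size] at hj
    cases j with
    | zero => omega
    | succ j =>
      simp only [deep]
      apply Finset.sum_eq_zero
      intro i _
      apply ih i
      have : (c i).size ≤ ∑ i, (c i).size :=
        Finset.single_le_sum (f := fun i => (c i).size) (fun i _ => Nat.zero_le _) (Finset.mem_univ i)
      omega

theorem pl_eq_sum_deep : ∀ (N : ℕ) (T : TAry t), deep N T = 0 →
    T.pathLength = ∑ j ∈ Finset.range N, deep (j+1) T := by
  intro N T
  induction T generalizing N with
  | nil => intro _; simp [pathLength, plFrom, deep]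
  | node c ih =>
    intro hN
    cases N with
    | zero => simp [deep] at hN
    | succ M =>
      simp only [deep] at hN
      have hc : ∀ i : Fin t, deep M (c i) = 0 := by
        intro i
        have : deep M (c i) ≤ ∑ i, deep M (c i) :=
          Finset.single_le_sum (f := fun i => deep M (c i)) (fun i _ => Nat.zero_le _) (Finset.mem_univ i)
        omega
      rw [pl_node]
      have : ∀ j ∈ Finset.range (M+1), deep (j+1) (node c) = ∑ i, deep j (c i) :=
        fun j _ => rfl
      rw [Finset.sum_congr rfl this, Finset.sum_comm]
      apply Finset.sum_congr rfl
      intro i _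
      rw [Finset.sum_range_succ' (fun j => deep j (c i)) M]
      rw [← ih i M (hc i), deep_zero]

/-- Kraft-type key inequality -/
theorem key (ht : 2 ≤ t) : ∀ (T : TAry t) (j : ℕ),
    t * T.leaves ≤ t ^ j + (t - 1) * deep j T := by
  intro T
  induction T with
  | nil => intro j; simp [leaves, deep]
  | node c ih =>
    intro j
    have hcard : (Finset.univ : Finset (Fin t)).card = t := by simp
    cases j with
    | zero =>
      simp only [leaves, deep, pow_zero]
      rcases Nat.eq_zero_or_pos (∑ i, (c i).leaves) with h | h
      · rw [h]
        simp only [Nat.max_eq_left (Nat.zero_le 1)]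
        have h2 : (t-1)*(1+∑ i, (c i).size) = (t-1) + (t-1)*∑ i, (c i).size := by ring
        omega
      · rw [Nat.max_eq_right h, Finset.mul_sum]
        have hle : ∀ i : Fin t, t * (c i).leaves ≤ 1 + (t-1) * (c i).size := by
          intro i
          have := ih i 0
          rwa [pow_zero, deep_zero] at this
        calc ∑ i, t * (c i).leaves ≤ ∑ i : Fin t, (1 + (t-1) * (c i).size) :=
              Finset.sum_le_sum (fun i _ => hle i)
          _ = t + (t-1) * ∑ i, (c i).size := by
              rw [Finset.sum_add_distrib, ← Finset.mul_sum]
              simp [hcard]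
          _ ≤ 1 + (t-1) * (1 + ∑ i, (c i).size) := by
              rw [Nat.mul_add, Nat.mul_one]; omega
    | succ j =>
      simp only [leaves, deep]
      rcases Nat.eq_zero_or_pos (∑ i, (c i).leaves) with h | h
      · rw [h]
        simp only [Nat.max_eq_left (Nat.zero_le 1), Nat.mul_one]
        have : t ≤ t ^ (j+1) := Nat.le_self_pow (Nat.succ_ne_zero j) t
        omega
      · rw [Nat.max_eq_right h, Finset.mul_sum]
        calc ∑ i, t * (c i).leaves ≤ ∑ i : Fin t, (t ^ j + (t-1) * deep j (c i)) :=
              Finset.sum_le_sum (fun i _ => ih i j)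
          _ = t * t ^ j + (t-1) * ∑ i, deep j (c i) := by
              rw [Finset.sum_add_distrib, ← Finset.mul_sum]
              simp [hcard]
          _ = t ^ (j+1) + (t-1) * ∑ i, deep j (c i) := by ring

theorem depthCount_zero_le (T : TAry t) : depthCount 0 T ≤ 1 := by
  cases T <;> simp [depthCount]

/-- profile/leaf constraint -/
theorem dc_la (T : TAry t) : ∀ j : ℕ,
    depthCount (j+1) T + t * leavesAt j T ≤ t * depthCount j T := by
  induction T with
  | nil => intro j; simp [depthCount, leavesAt]
  | node c ih =>
    intro j
    cases j with
    | zero =>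
      simp only [depthCount, leavesAt]
      split
      · rename_i h
        have : ∀ i : Fin t, (c i).size = 0 := by
          intro i
          have : (c i).size ≤ ∑ i, (c i).size :=
            Finset.single_le_sum (f := fun i => (c i).size) (fun i _ => Nat.zero_le _) (Finset.mem_univ i)
          omega
        have hnil : ∀ i : Fin t, depthCount 0 (c i) = 0 := by
          intro i; rw [size_eq_zero (this i)]; rfl
        rw [Finset.sum_congr rfl (fun i _ => hnil i)]
        simp
      · have hcard : (Finset.univ : Finset (Fin t)).card = t := by simp
        calc (∑ i, depthCount 0 (c i)) + t * 0 = ∑ i, depthCount 0 (c i) := by ring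
          _ ≤ ∑ _i : Fin t, 1 := Finset.sum_le_sum (fun i _ => depthCount_zero_le (c i))
          _ = t * 1 := by simp
    | succ j =>
      simp only [depthCount, leavesAt, Finset.mul_sum]
      rw [← Finset.sum_add_distrib]
      exact Finset.sum_le_sum (fun i _ => ih i j)




theorem split_sum (c : ℕ) (g : ℕ → ℕ) (h0 : g 0 = 0) (hadd : ∀ y, g (c + y) = g c + g y) :
    ∀ (n x : ℕ), x ≤ n * c → ∑ i ∈ Finset.range n, g (min c (x - i * c)) = g x := by
  intro n
  induction n with
  | zero => intro x hx; simp at hx; simp [hx, h0]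
  | succ n ih =>
    intro x hx
    rw [Finset.sum_range_succ' (fun i => g (min c (x - i * c))) n]
    have hrw : ∀ i : ℕ, x - (i+1)*c = (x - c) - i*c := by
      intro i
      have : (i+1)*c = i*c + c := by ring
      omega
    simp only [hrw]
    rcases le_or_gt c x with h | h
    · have hxc : x - c ≤ n * c := by
        have : (n+1)*c = n*c + c := by ring
        omega
      rw [ih (x - c) hxc]
      have hmin : min c (x - 0 * c) = c := by simp [Nat.min_eq_left, h]
      rw [hmin]
      have := hadd (x - c)
      rw [Nat.add_sub_cancel' h] at this
      omega
    · have hz : ∀ i ∈ Finset.range n, g (min c ((x - c) - i*c)) = 0 := by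
        intro i _
        have h1 : x - c = 0 := by omega
        have h2 : min c ((x-c) - i*c) = 0 := by simp [h1]
        rw [h2, h0]
      rw [Finset.sum_eq_zero hz]
      have hmin : min c (x - 0 * c) = x := by simp; omega
      rw [hmin]
      exact Nat.zero_add _

theorem geom_sum {t : ℕ} (ht : 2 ≤ t) : ∀ a b : ℕ, a ≤ b →
    (t-1) * (∑ i ∈ Finset.Ico a b, t^i) + t^a = t^b := by
  intro a b hab
  induction b, hab using Nat.le_induction with
  | base => simp
  | succ b hab ih =>
    rw [Finset.sum_Ico_succ_top hab, Nat.mul_add]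
    have h1 : (t-1)*t^b + t^b = t * t^b := by
      have h : t - 1 + 1 = t := by omega
      calc (t-1)*t^b + t^b = ((t-1)+1)*t^b := by ring
        _ = t*t^b := by rw [h]
    have h2 : t^(b+1) = t * t^b := by rw [pow_succ]; ring
    omega

theorem dsum (t : ℕ) : ∀ m : ℕ,
    ∑ j ∈ Finset.range m, ∑ i ∈ Finset.Ico (j+1) m, t^i = ∑ i ∈ Finset.range m, i * t^i := by
  intro m
  induction m with
  | zero => simp
  | succ m ih =>
    rw [Finset.sum_range_succ, Finset.sum_range_succ]
    have h1 : ∀ j ∈ Finset.range m, ∑ i ∈ Finset.Ico (j+1) (m+1), t^i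
        = (∑ i ∈ Finset.Ico (j+1) m, t^i) + t^m := by
      intro j hj
      simp only [Finset.mem_range] at hj
      exact Finset.sum_Ico_succ_top hj _
    rw [Finset.sum_congr rfl h1, Finset.sum_add_distrib, ih]
    simp

theorem sum_t (t m : ℕ) : ∑ j ∈ Finset.range (m+1), t^j = 1 + t * ∑ j ∈ Finset.range m, t^j := by
  rw [Finset.sum_range_succ' (fun j => t^j) m]
  simp [pow_succ, Finset.mul_sum]
  ring_nf

theorem sum_jt (t m : ℕ) : ∑ j ∈ Finset.range (m+1), j * t^j
    = t * ((∑ j ∈ Finset.range m, j*t^j) + ∑ j ∈ Finset.range m, t^j) := by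
  rw [Finset.sum_range_succ' (fun j => j * t^j) m]
  simp only [Nat.zero_mul, pow_zero, add_zero, Nat.mul_add, Finset.mul_sum]
  rw [← Finset.sum_add_distrib]
  apply Finset.sum_congr rfl
  intro i _
  rw [pow_succ]
  ring


def F (t : ℕ) : ℕ → ℕ → TAry t
  | 0, x => if x = 0 then nil else node (fun _ => nil)
  | m+1, x => node (fun i => F t m (min (t^m) (x - (i:ℕ) * t^m)))

theorem sum_parts (t c x : ℕ) (hx : x ≤ t * c) :
    ∑ i : Fin t, min c (x - (i:ℕ)*c) = x := by
  rw [Fin.sum_univ_eq_sum_range (fun i => min c (x - i*c)) t]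
  exact split_sum c id rfl (fun y => rfl) t x hx

theorem ceil_add_pow (ht : 2 ≤ t) {m : ℕ} (hm : 1 ≤ m) (y : ℕ) :
    (t^m + y + (t-1))/t = (t^m + (t-1))/t + (y + (t-1))/t := by
  have hpow : t * t^(m-1) = t^m := by
    rw [← pow_succ']
    congr 1
    omega
  have key : ∀ z, (z + t * t^(m-1))/t = z/t + t^(m-1) :=
    fun z => Nat.add_mul_div_left z _ (by omega)
  have h1 : (t^m + y + (t-1))/t = (y + (t-1))/t + t^(m-1) := by
    rw [show t^m + y + (t-1) = (y + (t-1)) + t * t^(m-1) by rw [hpow]; ring]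
    exact key _
  have h2 : (t^m + (t-1))/t = t^(m-1) := by
    rw [show t^m + (t-1) = (t-1) + t * t^(m-1) by rw [hpow]; ring]
    rw [key, Nat.div_eq_of_lt (by omega)]
    omega
  omega

theorem sum_parts_ceil (ht : 2 ≤ t) {m : ℕ} (hm : 1 ≤ m) (x : ℕ) (hx : x ≤ t * t^m) :
    ∑ i : Fin t, ((min (t^m) (x - (i:ℕ)*t^m)) + (t-1))/t = (x + (t-1))/t := by
  rw [Fin.sum_univ_eq_sum_range (fun i => ((min (t^m) (x - i*t^m)) + (t-1))/t) t]
  exact split_sum (t^m) (fun y => (y + (t-1))/t) (Nat.div_eq_of_lt (by omega))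
    (fun y => ceil_add_pow ht hm y) t x hx

theorem size_F (ht : 2 ≤ t) : ∀ m x, x ≤ t^m →
    size (F t m x) = (∑ i ∈ Finset.range m, t^i) + x := by
  intro m
  induction m with
  | zero =>
    intro x hx
    simp only [pow_zero] at hx
    interval_cases x <;> simp [F, size]
  | succ m ih =>
    intro x hx
    have hxt : x ≤ t * t^m := by
      rw [← pow_succ']; exact hx
    simp only [F, size]
    have h1 : ∀ i : Fin t, size (F t m (min (t^m) (x - (i:ℕ)*t^m)))
        = (∑ i ∈ Finset.range m, t^i) + min (t^m) (x - (i:ℕ)*t^m) :=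
      fun i => ih _ (Nat.min_le_left _ _)
    rw [Finset.sum_congr rfl (fun i _ => h1 i), Finset.sum_add_distrib]
    rw [Finset.sum_const, sum_parts t (t^m) x hxt]
    simp only [Finset.card_univ, Fintype.card_fin, smul_eq_mul]
    rw [sum_t]
    ring

theorem pathLength_F (ht : 2 ≤ t) : ∀ m x, x ≤ t^m →
    pathLength (F t m x) = (∑ j ∈ Finset.range m, j * t^j) + m * x := by
  intro m
  induction m with
  | zero =>
    intro x hx
    simp only [pow_zero] at hx
    interval_cases x <;> simp [F, pathLength, plFrom]
  | succ m ih =>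
    intro x hx
    have hxt : x ≤ t * t^m := by rw [← pow_succ']; exact hx
    rw [show F t (m+1) x = node (fun i => F t m (min (t^m) (x - (i:ℕ) * t^m))) from rfl]
    rw [pl_node]
    have h1 : ∀ i : Fin t,
        pathLength (F t m (min (t^m) (x - (i:ℕ)*t^m))) + size (F t m (min (t^m) (x - (i:ℕ)*t^m)))
        = ((∑ j ∈ Finset.range m, j * t^j) + (∑ j ∈ Finset.range m, t^j))
          + (m+1) * (min (t^m) (x - (i:ℕ)*t^m)) := by
      intro i
      rw [ih _ (Nat.min_le_left _ _), size_F ht _ _ (Nat.min_le_left _ _)]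
      try ring
    rw [Finset.sum_congr rfl (fun i _ => h1 i), Finset.sum_add_distrib]
    rw [Finset.sum_const, ← Finset.mul_sum, sum_parts t (t^m) x hxt]
    simp only [Finset.card_univ, Fintype.card_fin, smul_eq_mul]
    rw [sum_jt]
    try ring

theorem leaves_F0 (t : ℕ) : ∀ y ≤ 1, leaves (F t 0 y) = y := by
  intro y hy
  interval_cases y <;> simp [F, leaves]

theorem leaves_F_node (t m x : ℕ) (hm : 1 ≤ m) : ∃ c, F t m x = node c := by
  cases m with
  | zero => omega
  | succ m => exact ⟨_, rfl⟩

theorem leaves_node_pos (c : Fin t → TAry t) : 1 ≤ leaves (node c) := by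
  simp [leaves]

theorem leaves_F (ht : 2 ≤ t) : ∀ m, 1 ≤ m → ∀ x, x ≤ t^m →
    leaves (F t m x) + (x + (t-1))/t = x + t^(m-1) := by
  intro m
  induction m with
  | zero => omega
  | succ m ih =>
    intro _ x hx
    have hxt : x ≤ t * t^m := by rw [← pow_succ']; exact hx
    rcases Nat.eq_zero_or_pos m with hm0 | hm1
    · subst hm0
      -- base case m = 1
      have hxt' : x ≤ t := by simpa using hxt
      rw [show F t 1 x = node (fun i => F t 0 (min (t^0) (x - (i:ℕ) * t^0))) from rfl]
      simp only [leaves, pow_zero]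
      have h1 : ∀ i : Fin t, leaves (F t 0 (min 1 (x - (i:ℕ)*1))) = min 1 (x - (i:ℕ)*1) :=
        fun i => leaves_F0 t _ (Nat.min_le_left _ _)
      rw [Finset.sum_congr rfl (fun i _ => h1 i)]
      rw [sum_parts t 1 x (by omega)]
      rcases Nat.eq_zero_or_pos x with h | h
      · subst h
        simp [Nat.div_eq_of_lt (show t - 1 < t by omega)]
      · rw [Nat.max_eq_right h]
        have hd : (x + (t-1))/t = 1 := by
          apply Nat.div_eq_of_lt_le <;> omega
        rw [hd]
        simp
    · -- step, m ≥ 1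
      rw [show F t (m+1) x = node (fun i => F t m (min (t^m) (x - (i:ℕ) * t^m))) from rfl]
      simp only [leaves]
      set f : Fin t → ℕ := fun i => leaves (F t m (min (t^m) (x - (i:ℕ)*t^m))) with hf
      have hpos : 1 ≤ ∑ i, f i := by
        have h0 : 1 ≤ f ⟨0, by omega⟩ := by
          obtain ⟨c, hc⟩ := leaves_F_node t m (min (t^m) (x - 0*t^m)) hm1
          simp only [hf]
          rw [hc]
          exact leaves_node_pos c
        calc 1 ≤ f ⟨0, by omega⟩ := h0
          _ ≤ ∑ i, f i := Finset.single_le_sum (f := f) (fun i _ => Nat.zero_le _)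
              (Finset.mem_univ _)
      rw [Nat.max_eq_right hpos]
      have hIH : ∀ i : Fin t, f i + ((min (t^m) (x - (i:ℕ)*t^m)) + (t-1))/t
          = (min (t^m) (x - (i:ℕ)*t^m)) + t^(m-1) :=
        fun i => ih hm1 _ (Nat.min_le_left _ _)
      have hsum : ∑ i : Fin t, (f i + ((min (t^m) (x - (i:ℕ)*t^m)) + (t-1))/t)
          = ∑ i : Fin t, ((min (t^m) (x - (i:ℕ)*t^m)) + t^(m-1)) :=
        Finset.sum_congr rfl (fun i _ => hIH i)
      rw [Finset.sum_add_distrib, Finset.sum_add_distrib, sum_parts_ceil ht hm1 x hxt,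
        sum_parts t (t^m) x hxt, Finset.sum_const] at hsum
      simp only [Finset.card_univ, Fintype.card_fin, smul_eq_mul] at hsum
      have hpow : t * t^(m-1) = t^m := by
        rw [← pow_succ']; congr 1; omega
      simp only [Nat.add_sub_cancel]
      omega


end TAry


/-- A `t`-ary tree of minimal path length among trees with `ℓ` leaves has profile
`D_j = t^j` for `j < m`, `D_m = ℓ₁ = ℓ - ⌊(t^m - ℓ)/(t-1)⌋`, `D_j = 0` for `j > m`,
with `m = ⌈log_t ℓ⌉`; in particular all its leaves are at depth `m` or `m-1`. -/
theorem stmt16 (t ℓ : ℕ) (ht : 2 ≤ t) (hℓ : 1 ≤ ℓ) (T : TAry t) (hT : T.leaves = ℓ)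
    (hmin : ∀ T' : TAry t, T'.leaves = ℓ → T.pathLength ≤ T'.pathLength) :
    (∀ j < Nat.clog t ℓ, TAry.depthCount j T = t ^ j) ∧
    TAry.depthCount (Nat.clog t ℓ) T = ℓ - (t ^ Nat.clog t ℓ - ℓ) / (t - 1) ∧
    (∀ j, Nat.clog t ℓ < j → TAry.depthCount j T = 0) ∧
    (∀ j, TAry.leavesAt j T ≠ 0 → j = Nat.clog t ℓ ∨ j = Nat.clog t ℓ - 1) := by
  classical
  open TAry in
  set m := Nat.clog t ℓ with hm
  have ht1 : 1 < t := ht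
  have hℓtm : ℓ ≤ t ^ m := Nat.le_pow_clog ht1 ℓ
  set k := (t ^ m - ℓ) / (t - 1) with hkdef
  set r := (t ^ m - ℓ) % (t - 1) with hrdef
  have hr : r < t - 1 := by rw [hrdef]; exact Nat.mod_lt _ (by omega)
  have hA : (t-1) * k + r = t^m - ℓ := by rw [hkdef, hrdef]; exact Nat.div_add_mod _ _
  clear_value k r
  have e2 : (t-1)*k + r + ℓ = t^m := by omega
  have hkℓ : k < ℓ := by
    rcases Nat.lt_or_ge ℓ 2 with h2 | h2
    · have hℓ1 : ℓ = 1 := by omega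
      have hm0 : m = 0 := by rw [hm, hℓ1]; exact Nat.clog_one_right t
      rw [hkdef, hm0, hℓ1]
      simp
    · have hpl : t^(m-1) < ℓ := by
        have := Nat.pow_pred_clog_lt_self ht1 h2
        rwa [Nat.pred_eq_sub_one] at this
      have hmpos : 0 < m := Nat.clog_pos ht1 h2
      have hq : t * t^(m-1) = t^m := by rw [← pow_succ']; congr 1; omega
      have hle : t * t^(m-1) ≤ t * (ℓ-1) := Nat.mul_le_mul_left t (by omega)
      have hmul : ℓ*(t-1) + ℓ = ℓ*t := by
        calc ℓ*(t-1) + ℓ = ℓ*((t-1)+1) := by ring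
          _ = ℓ*t := by congr 1; omega
      have hcomm : ℓ*t = t*ℓ := Nat.mul_comm _ _
      have hml : t*(ℓ-1) + t = t*ℓ := by
        calc t*(ℓ-1) + t = t*((ℓ-1)+1) := by ring
          _ = t*ℓ := by congr 1; omega
      rw [hkdef]
      rw [Nat.div_lt_iff_lt_mul (by omega : 0 < t - 1)]
      omega
  set ℓ₁ := ℓ - k with hℓ₁def
  clear_value ℓ₁
  have e1 : ℓ₁ + k = ℓ := by omega
  have hρ_key : ∀ j ≤ m, (t-1) * (ℓ₁ + ∑ i ∈ Finset.Ico j m, t^i) + t^j = t*ℓ + r := by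
    intro j hj
    have e3 := TAry.geom_sum ht j m hj
    have d0 : (t-1)*(ℓ₁ + ∑ i ∈ Finset.Ico j m, t^i)
        = (t-1)*ℓ₁ + (t-1)*(∑ i ∈ Finset.Ico j m, t^i) := by ring
    have d2 : (t-1)*ℓ₁ + (t-1)*k = (t-1)*ℓ := by rw [← Nat.mul_add, e1]
    have d3 : (t-1)*ℓ + ℓ = t*ℓ := by
      calc (t-1)*ℓ + ℓ = ((t-1)+1)*ℓ := by ring
        _ = t*ℓ := by congr 1; omega
    omega
  have hterm : ∀ j ≤ m, ℓ₁ + (∑ i ∈ Finset.Ico j m, t^i) ≤ TAry.deep j T := by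
    intro j hj
    by_contra hcon
    push_neg at hcon
    have h1 : t*ℓ ≤ t^j + (t-1)*TAry.deep j T := by
      have := TAry.key ht T j; rwa [hT] at this
    have h2 := hρ_key j hj
    have h3 : TAry.deep j T + 1 ≤ ℓ₁ + ∑ i ∈ Finset.Ico j m, t^i := hcon
    have h4 : (t-1)*(TAry.deep j T + 1) ≤ (t-1)*(ℓ₁ + ∑ i ∈ Finset.Ico j m, t^i) :=
      Nat.mul_le_mul_left _ h3
    have h5 : (t-1)*(TAry.deep j T + 1) = (t-1)*TAry.deep j T + (t-1) := by ring
    have h6 : (t-1)*(ℓ₁ + ∑ i ∈ Finset.Ico j m, t^i)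
        = (t-1)*ℓ₁ + (t-1)*(∑ i ∈ Finset.Ico j m, t^i) := by ring
    omega
  -- the optimal tree
  have hℓ₁m : ℓ₁ ≤ t^m := le_trans (by omega) hℓtm
  have hm0ℓ : m = 0 → (ℓ = 1 ∧ ℓ₁ = 1) := by
    intro hm0
    have h1 : ℓ = 1 := by rw [hm0] at hℓtm; simp at hℓtm; omega
    constructor
    · exact h1
    · omega
  have hleavesF : (TAry.F t m ℓ₁).leaves = ℓ := by
    rcases Nat.eq_zero_or_pos m with hm0 | hm1
    · obtain ⟨h1, h2⟩ := hm0ℓ hm0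
      rw [hm0, h2, h1]
      simp [TAry.F, TAry.leaves]
    · have lf := TAry.leaves_F ht m hm1 ℓ₁ hℓ₁m
      have h2 : 2 ≤ ℓ := by
        by_contra hc
        have hℓ1 : ℓ = 1 := by omega
        have : m = 0 := by rw [hm, hℓ1]; exact Nat.clog_one_right t
        omega
      have hpl : t^(m-1) < ℓ := by
        have := Nat.pow_pred_clog_lt_self ht1 h2
        rwa [Nat.pred_eq_sub_one] at this
      have hq : t * t^(m-1) = t^m := by rw [← pow_succ']; congr 1; omega
      have hd : (t-1)*t^(m-1) + t^(m-1) = t*t^(m-1) := by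
        calc (t-1)*t^(m-1) + t^(m-1) = ((t-1)+1)*t^(m-1) := by ring
          _ = t*t^(m-1) := by congr 1; omega
      have hkm : k < t^(m-1) := by
        have h5 : (t-1)*k < (t-1)*t^(m-1) := by omega
        exact Nat.lt_of_mul_lt_mul_left h5
      set K := t^(m-1) - k with hKdef
      have hK : K + k = t^(m-1) := by omega
      have hx1 : K*t + k*t = t^(m-1)*t := by rw [← add_mul, hK]
      have hx2 : t^(m-1)*t = t^m := by rw [← pow_succ]; congr 1; omega
      have hx3 : k*t = (t-1)*k + k := by
        calc k*t = k*((t-1)+1) := by congr 1; omega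
          _ = (t-1)*k + k := by ring
      have hKt : K*t = ℓ₁ + r := by omega
      have hdiv : (ℓ₁ + (t-1))/t = K := by
        apply Nat.div_eq_of_lt_le
        · omega
        · have : (K+1)*t = K*t + t := by ring
          omega
      rw [hdiv] at lf
      omega
  have hub : T.pathLength ≤ (∑ j ∈ Finset.range m, j*t^j) + m*ℓ₁ := by
    have := hmin (TAry.F t m ℓ₁) hleavesF
    rwa [TAry.pathLength_F ht m ℓ₁ hℓ₁m] at this
  -- lower bound decomposition
  set N := max T.size (m+1) with hNdef
  clear_value N
  have hNm : m + 1 ≤ N := hNdef ▸ le_max_right _ _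
  have hNs : T.size ≤ N := hNdef ▸ le_max_left _ _
  have hdN : TAry.deep N T = 0 := TAry.deep_of_size_le T N hNs
  have hPL : T.pathLength = ∑ j ∈ Finset.range N, TAry.deep (j+1) T :=
    TAry.pl_eq_sum_deep N T hdN
  have hP : ∑ j ∈ Finset.range m, (ℓ₁ + ∑ i ∈ Finset.Ico (j+1) m, t^i)
      = (∑ j ∈ Finset.range m, j*t^j) + m*ℓ₁ := by
    rw [Finset.sum_add_distrib, Finset.sum_const, Finset.card_range, TAry.dsum]
    simp [smul_eq_mul]
    ring
  have hsplitN : (∑ j ∈ Finset.range m, TAry.deep (j+1) T)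
      + ∑ j ∈ Finset.Ico m N, TAry.deep (j+1) T
      = ∑ j ∈ Finset.range N, TAry.deep (j+1) T := by
    simp only [Finset.range_eq_Ico]
    exact Finset.sum_Ico_consecutive (fun j => TAry.deep (j+1) T) (Nat.zero_le m) (by omega : m ≤ N)
  have hterm' : ∀ j ∈ Finset.range m,
      ℓ₁ + ∑ i ∈ Finset.Ico (j+1) m, t^i ≤ TAry.deep (j+1) T := by
    intro j hj
    simp only [Finset.mem_range] at hj
    exact hterm (j+1) (by omega)
  have hlb : ∑ j ∈ Finset.range m, (ℓ₁ + ∑ i ∈ Finset.Ico (j+1) m, t^i)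
      ≤ ∑ j ∈ Finset.range m, TAry.deep (j+1) T := Finset.sum_le_sum hterm'
  have hsum_eq : ∑ j ∈ Finset.range m, (ℓ₁ + ∑ i ∈ Finset.Ico (j+1) m, t^i)
      = ∑ j ∈ Finset.range m, TAry.deep (j+1) T := by omega
  have htail : ∑ j ∈ Finset.Ico m N, TAry.deep (j+1) T = 0 := by omega
  have hteq : ∀ j ∈ Finset.range m,
      ℓ₁ + ∑ i ∈ Finset.Ico (j+1) m, t^i = TAry.deep (j+1) T :=
    (Finset.sum_eq_sum_iff_of_le hterm').mp hsum_eq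
  have hdeep_eq : ∀ j, 1 ≤ j → j ≤ m →
      TAry.deep j T = ℓ₁ + ∑ i ∈ Finset.Ico j m, t^i := by
    intro j h1 h2
    obtain ⟨j', rfl⟩ : ∃ j', j = j'+1 := ⟨j-1, by omega⟩
    exact (hteq j' (Finset.mem_range.mpr (by omega))).symm
  have hdeep_0 : ∀ j, m < j → TAry.deep j T = 0 := by
    intro j hj
    rcases le_or_gt N j with h | h
    · exact TAry.deep_of_size_le T j (le_trans hNs h)
    · obtain ⟨j', rfl⟩ : ∃ j', j = j'+1 := ⟨j-1, by omega⟩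
      exact (Finset.sum_eq_zero_iff.mp htail) j' (Finset.mem_Ico.mpr ⟨by omega, by omega⟩)
  -- profile
  have hD0 : TAry.depthCount 0 T = 1 := by
    cases T with
    | nil => simp [TAry.leaves] at hT; omega
    | node c => simp [TAry.depthCount]
  have hDC : ∀ j, j < m → TAry.depthCount j T = t^j := by
    intro j hj
    rcases Nat.eq_zero_or_pos j with h0 | h1
    · rw [h0, hD0, pow_zero]
    · have h1' : TAry.deep j T = ℓ₁ + ∑ i ∈ Finset.Ico j m, t^i :=
        hdeep_eq j h1 (by omega)
      have h2 : TAry.deep (j+1) T = ℓ₁ + ∑ i ∈ Finset.Ico (j+1) m, t^i :=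
        hdeep_eq (j+1) (by omega) (by omega)
      have h3 := TAry.deep_succ T j
      have h4 : ∑ i ∈ Finset.Ico j m, t^i = t^j + ∑ i ∈ Finset.Ico (j+1) m, t^i :=
        Finset.sum_eq_sum_Ico_succ_bot hj _
      omega
  have hDm : TAry.depthCount m T = ℓ₁ := by
    rcases Nat.eq_zero_or_pos m with hm0 | hm1
    · obtain ⟨h1, h2⟩ := hm0ℓ hm0
      rw [hm0, hD0, h2]
    · have h1 : TAry.deep m T = ℓ₁ := by
        have := hdeep_eq m hm1 le_rfl
        simpa using this
      have h2 : TAry.deep (m+1) T = 0 := hdeep_0 (m+1) (by omega)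
      have h3 := TAry.deep_succ T m
      omega
  have hDgt : ∀ j, m < j → TAry.depthCount j T = 0 := by
    intro j hj
    have h1 := TAry.deep_succ T j
    have h2 := hdeep_0 j hj
    omega
  refine ⟨hDC, hDm, hDgt, ?_⟩
  intro j hj
  by_contra hcon
  push_neg at hcon
  obtain ⟨h1, h2⟩ := hcon
  have hc := TAry.dc_la T j
  have hcases : j < m - 1 ∨ m < j := by omega
  have hL0 : t * TAry.leavesAt j T = 0 := by
    rcases hcases with h | h
    · have hj1 : TAry.depthCount j T = t^j := hDC j (by omega)
      have hj2 : TAry.depthCount (j+1) T = t^(j+1) := hDC (j+1) (by omega)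
      have hp : t^(j+1) = t*t^j := by rw [pow_succ]; ring
      rw [hj1, hj2, hp] at hc
      omega
    · have hj0 : TAry.depthCount j T = 0 := hDgt j h
      rw [hj0, Nat.mul_zero] at hc
      omega
  rcases Nat.mul_eq_zero.mp hL0 with h | h
  · omega
  · exact hj h
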